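/- Let P ≥ 5 be a prime, set ρ = P/log P, and for each prime p define the exponent α_p by: α_p = 0 if p > P; α_p = 1 if p ≤ P and ρ < (p² − p)/log p; and α_p = i for the integer i ≥ 2 such that (p^i − p^{i−1})/log p ≤ ρ < (p^{i+1} − p^i)/log p, otherwise. Let N_P = ∏_{p ≤ P} p^{α_p} and n_P = Σ_{p ≤ P} p^{α_p}. Then g(n_P) = N_P, and θ(P) ≤ log N_P ≤ ψ(P). -/

import Mathlib

/-- cost function: creal p 0 = 0, creal p k = p^k for k ≥ 1 -/
noncomputable def creal (p : ℕ) : ℕ → ℝ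
  | 0 => 0
  | (k+1) => (p : ℝ) ^ (k+1)

theorem creal_of_pos (p k : ℕ) (hk : 1 ≤ k) : creal p k = (p : ℝ) ^ k := by
  cases k with
  | zero => omega
  | succ k => rfl

theorem creal_zero (p : ℕ) : creal p 0 = 0 := rfl

/-- step increments are nondecreasing -/
theorem creal_step_mono (p : ℕ) (hp : 2 ≤ p) (i : ℕ) :
    creal p (i+1) - creal p i ≤ creal p (i+2) - creal p (i+1) := by
  have hp' : (2:ℝ) ≤ (p:ℝ) := by exact_mod_cast hp
  cases i with
  | zero =>
    simp only [creal]
    have : (p:ℝ) ^ 1 = p := pow_one _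
    have h2 : (p:ℝ)^2 = p * p := sq (p:ℝ)
    rw [this, h2]
    nlinarith
  | succ i =>
    simp only [creal]
    have hpow : (0:ℝ) ≤ (p:ℝ)^(i+1) := by positivity
    have e2 : (p:ℝ) ^ (i+1+1) = (p:ℝ)^(i+1) * p := by rw [pow_succ]
    have e3 : (p:ℝ) ^ (i+1+1+1) = (p:ℝ)^(i+1) * p * p := by rw [pow_succ, pow_succ]
    rw [e2, e3]
    nlinarith [mul_nonneg hpow (sq_nonneg ((p:ℝ)-1))]

theorem creal_step_mono' (p : ℕ) (hp : 2 ≤ p) {i j : ℕ} (hij : i ≤ j) :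
    creal p (i+1) - creal p i ≤ creal p (j+1) - creal p j := by
  induction j with
  | zero => have : i = 0 := by omega
            rw [this]
  | succ j ih =>
    rcases Nat.lt_or_ge i (j+1) with h | h
    · exact le_trans (ih (by omega)) (creal_step_mono p hp j)
    · have : i = j + 1 := by omega
      rw [this]

theorem chain_le (g : ℕ → ℝ) : ∀ n, (∀ i, i < n → g i ≤ g (i+1)) → g 0 ≤ g n := by
  intro n
  induction n with
  | zero => intro _; exact le_refl _
  | succ n ih =>
    intro h
    exact le_trans (ih fun i hi => h i (by omega)) (h n (by omega))

/-- The exponent α maximizes F(v) = ρ v log p − c(v). -/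
theorem Fmax (p : ℕ) (hp : 2 ≤ p) (ρ : ℝ) (α : ℕ)
    (Hle : ∀ j, j < α → creal p (j+1) - creal p j ≤ ρ * Real.log p)
    (Hge : ρ * Real.log p ≤ creal p (α+1) - creal p α) :
    ∀ v, ρ * v * Real.log p - creal p v ≤ ρ * α * Real.log p - creal p α := by
  intro v
  set F : ℕ → ℝ := fun k => ρ * k * Real.log p - creal p k with hF
  have hstep_up : ∀ j, j < α → F j ≤ F (j+1) := by
    intro j hj
    have := Hle j hj
    simp only [hF]
    push_cast
    nlinarith [this]
  have hstep_down : ∀ j, α ≤ j → F (j+1) ≤ F j := by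
    intro j hj
    have h1 : ρ * Real.log p ≤ creal p (j+1) - creal p j :=
      le_trans Hge (creal_step_mono' p hp hj)
    simp only [hF]
    push_cast
    nlinarith [h1]
  show F v ≤ F α
  rcases le_or_gt v α with h | h
  · have h2 := chain_le (fun i => F (v + i)) (α - v) (fun i hi => by
      have e : v + i + 1 = v + (i + 1) := by omega
      show F (v + i) ≤ F (v + (i + 1))
      rw [← e]
      exact hstep_up (v + i) (by omega))
    simp only [Nat.add_zero] at h2
    have e : v + (α - v) = α := by omega
    rwa [e] at h2
  · have h2 := chain_le (fun i => F (v - i)) (v - α) (fun i hi => by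
      have e : v - i = (v - (i+1)) + 1 := by omega
      have e2 : α ≤ v - (i+1) := by omega
      show F (v - i) ≤ F (v - (i + 1))
      rw [e]
      exact hstep_down _ e2)
    simp only [Nat.sub_zero] at h2
    have e : v - (v - α) = α := by omega
    rwa [e] at h2


theorem sum_le_prod' (s : Finset ℕ) (f : ℕ → ℕ) (h : ∀ i ∈ s, 2 ≤ f i) :
    ∑ i ∈ s, f i ≤ ∏ i ∈ s, f i := by
  induction s using Finset.cons_induction with
  | empty => simp
  | cons a s ha ih =>
    rw [Finset.sum_cons, Finset.prod_cons]
    have h2 : 2 ≤ f a := h a (Finset.mem_cons_self a s)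
    have hs : ∑ i ∈ s, f i ≤ ∏ i ∈ s, f i := ih fun i hi => h i (Finset.mem_cons_of_mem hi)
    rcases s.eq_empty_or_nonempty with rfl | ⟨i, hi⟩
    · simp
    · have h1 : ∀ j ∈ s, 1 ≤ f j := fun j hj => le_trans (by norm_num) (h j (Finset.mem_cons_of_mem hj))
      have hp2 : 2 ≤ ∏ i ∈ s, f i :=
        le_trans (h i (Finset.mem_cons_of_mem hi)) (Finset.single_le_prod' h1 hi)
      nlinarith

def ellF (m : ℕ) : ℕ := ∑ p ∈ m.primeFactors, p ^ m.factorization p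

theorem ellF_le_self (m : ℕ) (hm : m ≠ 0) : ellF m ≤ m := by
  conv_rhs => rw [← Nat.factorization_prod_pow_eq_self hm]
  rw [Nat.prod_factorization_eq_prod_primeFactors]
  exact sum_le_prod' _ _ fun p hp => by
    have hp' := Nat.prime_of_mem_primeFactors hp
    have h1 : 1 ≤ m.factorization p := (Nat.Prime.factorization_pos_of_dvd hp'
      hm (Nat.dvd_of_mem_primeFactors hp))
    calc 2 ≤ p := hp'.two_le
      _ = p ^ 1 := (pow_one p).symm
      _ ≤ p ^ m.factorization p := Nat.pow_le_pow_right (le_of_lt hp'.one_lt) h1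

theorem ellF_lcm_le (x y : ℕ) (hx : x ≠ 0) (hy : y ≠ 0) :
    ellF (Nat.lcm x y) ≤ ellF x + ellF y := by
  have hl : Nat.lcm x y ≠ 0 := Nat.lcm_ne_zero hx hy
  have hpf : (Nat.lcm x y).primeFactors = x.primeFactors ∪ y.primeFactors := by
    ext p
    simp only [Nat.mem_primeFactors, Finset.mem_union]
    constructor
    · rintro ⟨hp, hd, -⟩
      rcases (Nat.Prime.dvd_mul hp).mp (hd.trans (Nat.lcm_dvd_mul x y)) with h | h
      · exact Or.inl ⟨hp, h, hx⟩
      · exact Or.inr ⟨hp, h, hy⟩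
    · rintro (⟨hp, hd, -⟩ | ⟨hp, hd, -⟩)
      · exact ⟨hp, hd.trans (Nat.dvd_lcm_left x y), hl⟩
      · exact ⟨hp, hd.trans (Nat.dvd_lcm_right x y), hl⟩
  rw [ellF, hpf]
  have key : ∀ p ∈ x.primeFactors ∪ y.primeFactors,
      p ^ (Nat.lcm x y).factorization p ≤
        (if p ∈ x.primeFactors then p ^ x.factorization p else 0) +
        (if p ∈ y.primeFactors then p ^ y.factorization p else 0) := by
    intro p hp
    rw [Nat.factorization_lcm hx hy]
    simp only [Finsupp.sup_apply]
    rcases Finset.mem_union.mp hp with h | h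
    · rcases le_or_gt (y.factorization p) (x.factorization p) with hle | hlt
      · rw [sup_eq_left.mpr hle, if_pos h]
        split <;> omega
      · have hy' : p ∈ y.primeFactors := by
          rw [Nat.mem_primeFactors]
          have hp' := Nat.prime_of_mem_primeFactors h
          exact ⟨hp', Nat.dvd_of_factorization_pos (by omega), hy⟩
        rw [sup_eq_right.mpr (le_of_lt hlt), if_pos hy']
        split <;> omega
    · rcases le_or_gt (x.factorization p) (y.factorization p) with hle | hlt
      · rw [sup_eq_right.mpr hle, if_pos h]
        split <;> omega
      · have hx' : p ∈ x.primeFactors := by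
          rw [Nat.mem_primeFactors]
          have hp' := Nat.prime_of_mem_primeFactors h
          exact ⟨hp', Nat.dvd_of_factorization_pos (by omega), hx⟩
        rw [sup_eq_left.mpr (le_of_lt hlt), if_pos hx']
        split <;> omega
  calc ∑ p ∈ x.primeFactors ∪ y.primeFactors, p ^ (Nat.lcm x y).factorization p
      ≤ ∑ p ∈ x.primeFactors ∪ y.primeFactors,
        ((if p ∈ x.primeFactors then p ^ x.factorization p else 0) +
         (if p ∈ y.primeFactors then p ^ y.factorization p else 0)) :=
        Finset.sum_le_sum key
    _ = ellF x + ellF y := by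
        rw [Finset.sum_add_distrib, Finset.sum_ite_mem, Finset.sum_ite_mem,
          Finset.union_inter_cancel_left, Finset.union_inter_cancel_right]
        rfl

theorem ellF_multiset_lcm (s : Multiset ℕ) (h : ∀ x ∈ s, x ≠ 0) :
    ellF s.lcm ≤ s.sum := by
  induction s using Multiset.induction with
  | empty => simp [Multiset.lcm_zero, ellF]
  | cons a s ih =>
    rw [Multiset.lcm_cons, Multiset.sum_cons]
    have ha : a ≠ 0 := h a (Multiset.mem_cons_self a s)
    have hs : ∀ x ∈ s, x ≠ 0 := fun x hx => h x (Multiset.mem_cons_of_mem hx)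
    have hls : s.lcm ≠ 0 := by
      intro h0
      rcases (Multiset.lcm_eq_zero_iff s).mp h0 with hmem
      exact hs 0 hmem rfl
    calc ellF (lcm a s.lcm) = ellF (Nat.lcm a s.lcm) := rfl
      _ ≤ ellF a + ellF s.lcm := ellF_lcm_le _ _ ha hls
      _ ≤ a + s.sum := Nat.add_le_add (ellF_le_self a ha) (ih hs)

theorem ellF_orderOf_le {n : ℕ} (σ : Equiv.Perm (Fin n)) : ellF (orderOf σ) ≤ n := by
  rw [← Equiv.Perm.lcm_cycleType]
  calc ellF σ.cycleType.lcm ≤ σ.cycleType.sum :=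
        ellF_multiset_lcm _ fun x hx => by
          have := Equiv.Perm.two_le_of_mem_cycleType hx; omega
    _ = σ.support.card := Equiv.Perm.sum_cycleType σ
    _ ≤ Fintype.card (Fin n) := σ.support.card_le_univ
    _ = n := Fintype.card_fin n

theorem nat_prod_dvd (s : Finset ℕ) (f : ℕ → ℕ) (n : ℕ)
    (hc : ∀ p ∈ s, ∀ q ∈ s, p ≠ q → Nat.Coprime (f p) (f q))
    (hd : ∀ p ∈ s, f p ∣ n) : (∏ p ∈ s, f p) ∣ n := by
  induction s using Finset.cons_induction with
  | empty => simpa using Nat.one_dvd n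
  | cons a s ha ih =>
    rw [Finset.prod_cons]
    have hcop : Nat.Coprime (f a) (∏ p ∈ s, f p) :=
      Nat.Coprime.prod_right fun q hq =>
        hc a (Finset.mem_cons_self a s) q (Finset.mem_cons_of_mem hq)
          (fun h => ha (h ▸ hq))
    exact Nat.Coprime.mul_dvd_of_dvd_of_dvd hcop (hd a (Finset.mem_cons_self a s))
      (ih (fun p hp q hq hpq => hc p (Finset.mem_cons_of_mem hp) q (Finset.mem_cons_of_mem hq) hpq)
        (fun p hp => hd p (Finset.mem_cons_of_mem hp)))

theorem exists_perm_orderOf (s : Finset ℕ) (hs : ∀ p ∈ s, p.Prime) (a : ℕ → ℕ)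
    (ha : ∀ p ∈ s, 1 ≤ a p) :
    ∃ σ : Equiv.Perm (Fin (∑ p ∈ s, p ^ a p)), orderOf σ = ∏ p ∈ s, p ^ a p := by
  set m : Multiset ℕ := s.val.map (fun p => p ^ a p) with hm
  have hsum : m.sum = ∑ p ∈ s, p ^ a p := rfl
  have h2 : ∀ x ∈ m, 2 ≤ x := by
    intro x hx
    rcases Multiset.mem_map.mp hx with ⟨p, hp, rfl⟩
    have hp' := hs p hp
    calc 2 ≤ p := hp'.two_le
      _ = p ^ 1 := (pow_one p).symm
      _ ≤ p ^ a p := Nat.pow_le_pow_right (le_of_lt hp'.one_lt) (ha p hp)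
  obtain ⟨g, hg⟩ := (Equiv.Perm.exists_with_cycleType_iff (Fin (∑ p ∈ s, p ^ a p))).mpr
    ⟨by rw [hsum, Fintype.card_fin], h2⟩
  refine ⟨g, ?_⟩
  rw [← Equiv.Perm.lcm_cycleType, hg]
  have hml : m.lcm = s.lcm (fun p => p ^ a p) := rfl
  rw [hml]
  apply Nat.dvd_antisymm
  · exact Finset.lcm_dvd fun p hp => Finset.dvd_prod_of_mem _ hp
  · exact nat_prod_dvd s _ _
      (fun p hp q hq hpq => Nat.Coprime.pow _ _ ((Nat.coprime_primes (hs p hp) (hs q hq)).mpr hpq))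
      (fun p hp => Finset.dvd_lcm hp)


theorem pow_bound_aux (p : ℕ) (hp : 2 ≤ p) (i : ℕ) :
    (i : ℝ) - 1 ≤ (p:ℝ)^(i-1) * ((p:ℝ) - 1) := by
  have h2 : (2:ℝ) ≤ (p:ℝ) := by exact_mod_cast hp
  have h1 : ((i-1 : ℕ) : ℝ) < (2:ℝ)^(i-1) := by
    exact_mod_cast Nat.lt_two_pow_self (n := i-1)
  have h3 : (2:ℝ)^(i-1) ≤ (p:ℝ)^(i-1) := by
    apply pow_le_pow_left₀ (by norm_num) h2
  have h4 : (1:ℝ) ≤ (p:ℝ) - 1 := by linarith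
  have h5 : (0:ℝ) ≤ (p:ℝ)^(i-1) := by positivity
  have h6 : (i:ℝ) - 1 ≤ ((i-1:ℕ):ℝ) := by
    rcases Nat.eq_zero_or_pos i with rfl | hi
    · simp
    · push_cast [Nat.cast_sub hi]; linarith
  nlinarith

/-- Determination of the exponent cases -/
theorem determine (P p : ℕ) (hP5 : 5 ≤ P) (hp : p.Prime) (hpP : p ≤ P) :
    (P:ℝ)/Real.log P < ((p:ℝ)^2 - p)/Real.log p ∨
    ∃ i, 2 ≤ i ∧ ((p:ℝ)^i - (p:ℝ)^(i-1))/Real.log p ≤ (P:ℝ)/Real.log P ∧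
        (P:ℝ)/Real.log P < ((p:ℝ)^(i+1) - (p:ℝ)^i)/Real.log p := by
  have hp2 : 2 ≤ p := hp.two_le
  have hlogp : 0 < Real.log p := Real.log_pos (by exact_mod_cast hp.one_lt)
  have hlogP : 0 < Real.log P := Real.log_pos (by
    have : (1:ℝ) < 5 := by norm_num
    calc (1:ℝ) < 5 := this
      _ ≤ P := by exact_mod_cast hP5)
  set ρ : ℝ := (P:ℝ)/Real.log P with hρ
  have hρP : ρ * Real.log P = P := div_mul_cancel₀ _ (ne_of_gt hlogP)
  have hρ0 : 0 ≤ ρ := div_nonneg (by positivity) (le_of_lt hlogP)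
  by_cases hc : ρ < ((p:ℝ)^2 - p)/Real.log p
  · exact Or.inl hc
  · right
    push_neg at hc
    have hc' : (p:ℝ)^2 - p ≤ ρ * Real.log p := (div_le_iff₀ hlogp).mp hc
    set T : Set ℕ := {i : ℕ | 2 ≤ i ∧ (p:ℝ)^i - (p:ℝ)^(i-1) ≤ ρ * Real.log p} with hT
    have h2T : 2 ∈ T := by
      refine ⟨le_refl 2, ?_⟩
      norm_num
      simpa using hc'
    have hbdd : BddAbove T := by
      refine ⟨P + 1, fun i hi => ?_⟩
      obtain ⟨h2i, hile⟩ := hi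
      have key : (p:ℝ)^i - (p:ℝ)^(i-1) = (p:ℝ)^(i-1) * ((p:ℝ) - 1) := by
        have : (p:ℝ)^i = (p:ℝ)^(i-1) * p := by
          rw [← pow_succ]
          congr 1
          omega
        rw [this]; ring
      have h1 : (i:ℝ) - 1 ≤ ρ * Real.log p := by
        calc (i:ℝ) - 1 ≤ (p:ℝ)^(i-1) * ((p:ℝ)-1) := pow_bound_aux p hp2 i
          _ = (p:ℝ)^i - (p:ℝ)^(i-1) := key.symm
          _ ≤ ρ * Real.log p := hile
      have h2 : ρ * Real.log p ≤ (P:ℝ) := by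
        calc ρ * Real.log p ≤ ρ * Real.log P := by
              apply mul_le_mul_of_nonneg_left _ hρ0
              exact Real.log_le_log (by positivity) (by exact_mod_cast hpP)
          _ = P := hρP
      have : (i:ℝ) ≤ (P:ℝ) + 1 := by linarith
      exact_mod_cast this
    set α := sSup T with hα
    have hmem : α ∈ T := Nat.sSup_mem ⟨2, h2T⟩ hbdd
    have hnot : α + 1 ∉ T := fun h => by
      have := le_csSup hbdd h
      omega
    obtain ⟨h2α, hαle⟩ := hmem
    refine ⟨α, h2α, (div_le_iff₀ hlogp).mpr hαle, (lt_div_iff₀ hlogp).mpr ?_⟩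
    have := hnot
    rw [hT] at this
    simp only [Set.mem_setOf_eq, not_and, not_le] at this
    have h2 := this (by omega)
    have e : α + 1 - 1 = α := by omega
    rwa [e] at this

theorem sq_le_two_pow (n : ℕ) (hn : 4 ≤ n) : n^2 ≤ 2^n := by
  induction n with
  | zero => omega
  | succ n ih =>
    rcases Nat.lt_or_ge n 4 with h | h
    · have : n = 3 := by omega
      subst this; norm_num
    · have h1 := ih h
      have h2 : 2*n + 1 ≤ n^2 := by nlinarith
      calc (n+1)^2 = n^2 + (2*n+1) := by ring
        _ ≤ 2^n + 2^n := Nat.add_le_add h1 (le_trans h2 h1)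
        _ = 2^(n+1) := by rw [pow_succ, Nat.mul_two]

theorem exp_one_le_three : Real.exp 1 ≤ 3 := by
  have := Real.exp_one_lt_d9
  linarith

/-- p log P ≤ P log p for primes p ≤ P, P ≥ 5 -/
theorem plogP_le (P p : ℕ) (hP5 : 5 ≤ P) (hp : p.Prime) (hpP : p ≤ P) :
    (p:ℝ) * Real.log P ≤ (P:ℝ) * Real.log p := by
  have hlogP : 0 < Real.log P := Real.log_pos (by
    have : (5:ℝ) ≤ P := by exact_mod_cast hP5
    linarith)
  rcases Nat.lt_or_ge p 3 with h | h
  · have hp2 : p = 2 := by have := hp.two_le; omega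
    subst hp2
    -- 2 log P ≤ P log 2  ⟸  P^2 ≤ 2^P
    have hnat : P^2 ≤ 2^P := sq_le_two_pow P (by omega)
    have hreal : (P:ℝ)^2 ≤ (2:ℝ)^P := by exact_mod_cast hnat
    have h1 : Real.log ((P:ℝ)^2) ≤ Real.log ((2:ℝ)^P) :=
      Real.log_le_log (by positivity) hreal
    rw [Real.log_pow, Real.log_pow] at h1
    push_cast at h1 ⊢
    linarith
  · -- use antitonicity of log x / x on [e, ∞)
    have hpe : Real.exp 1 ≤ (p:ℝ) := le_trans exp_one_le_three (by exact_mod_cast h)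
    have hPe : Real.exp 1 ≤ (P:ℝ) := le_trans hpe (by exact_mod_cast hpP)
    have := Real.log_div_self_antitoneOn hpe hPe
      (by exact_mod_cast hpP)
    simp only at this
    have hp0 : (0:ℝ) < p := by positivity
    have hP0 : (0:ℝ) < P := by positivity
    rw [div_le_div_iff₀ hP0 hp0] at this
    linarith

/-- log p / p ≤ log P / P for p > P ≥ 5, i.e. ρ log p ≤ p -/
theorem plogP_ge (P p : ℕ) (hP5 : 5 ≤ P) (hPp : P < p) :
    (P:ℝ) * Real.log p ≤ (p:ℝ) * Real.log P := by
  have hPe : Real.exp 1 ≤ (P:ℝ) := le_trans exp_one_le_three (by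
    have : (5:ℝ) ≤ P := by exact_mod_cast hP5
    linarith)
  have hpe : Real.exp 1 ≤ (p:ℝ) := le_trans hPe (by exact_mod_cast (le_of_lt hPp))
  have := Real.log_div_self_antitoneOn hPe hpe
    (by exact_mod_cast (le_of_lt hPp))
  simp only at this
  have hp0 : (0:ℝ) < p := by
    have : 0 < p := by omega
    exact_mod_cast this
  have hP0 : (0:ℝ) < P := by
    have : 0 < P := by omega
    exact_mod_cast this
  rw [div_le_div_iff₀ hp0 hP0] at this
  linarith

/-- The key bound p^α ≤ P for the superchampion exponents -/
theorem hard_bound (P p α : ℕ) (hP5 : 5 ≤ P) (hp : p.Prime) (hpP : p ≤ P) (hα : 1 ≤ α)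
    (H : 2 ≤ α → ((p:ℝ)^α - (p:ℝ)^(α-1)) * Real.log P ≤ (P:ℝ) * Real.log p) :
    p ^ α ≤ P := by
  by_contra hcon
  push_neg at hcon  -- P < p ^ α
  rcases Nat.lt_or_ge α 2 with h1 | h2
  · have : α = 1 := by omega
    subst this
    simp at hcon
    omega
  have H := H h2
  have hp2 : 2 ≤ p := hp.two_le
  have hp2' : (2:ℝ) ≤ (p:ℝ) := by exact_mod_cast hp2
  have hlogp : 0 < Real.log p := Real.log_pos (by exact_mod_cast hp.one_lt)
  have hlogP : 0 < Real.log P := Real.log_pos (by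
    have : (5:ℝ) ≤ P := by exact_mod_cast hP5; 
    linarith)
  have hlogpP : Real.log p ≤ Real.log P :=
    Real.log_le_log (by positivity) (by exact_mod_cast hpP)
  have epow : (p:ℝ)^α = (p:ℝ)^(α-1) * p := by
    rw [← pow_succ]
    congr 1
    omega
  have hPpos : (0:ℝ) < (P:ℝ) := by
    have : 0 < P := by omega
    exact_mod_cast this
  have hppos : (0:ℝ) < (p:ℝ) := by linarith
  have hpm1pos : (0:ℝ) < (p:ℝ)^(α-1) := by positivity
  have hconR : (P:ℝ) < (p:ℝ)^α := by
    have : (P:ℝ) < ((p^α : ℕ):ℝ) := by exact_mod_cast hcon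
    simpa using this
  -- Step 2 : (p-1) log P < p log p
  have step2 : ((p:ℝ) - 1) * Real.log P < (p:ℝ) * Real.log p := by
    have h3 : (P:ℝ) * Real.log p < (p:ℝ)^(α-1) * ((p:ℝ) * Real.log p) := by
      rw [epow] at hconR
      have := mul_lt_mul_of_pos_right hconR hlogp
      linarith [this]
    have h4 : (p:ℝ)^(α-1) * (((p:ℝ)-1) * Real.log P) ≤ (P:ℝ) * Real.log p := by
      calc (p:ℝ)^(α-1) * (((p:ℝ)-1) * Real.log P)
          = ((p:ℝ)^α - (p:ℝ)^(α-1)) * Real.log P := by rw [epow]; ring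
        _ ≤ (P:ℝ) * Real.log p := H
    have := lt_of_le_of_lt h4 h3
    exact lt_of_mul_lt_mul_left this (le_of_lt hpm1pos)
  rcases Nat.lt_or_ge p 3 with hple | hpge
  · -- p = 2 : log P < 2 log 2 = log 4, so P < 4, contradiction
    have hp2eq : p = 2 := by omega
    subst hp2eq
    have hlt : Real.log (P:ℝ) < Real.log ((2:ℝ)^2) := by
      rw [Real.log_pow]
      push_cast at step2 ⊢
      linarith
    have hPlt : (P:ℝ) < (2:ℝ)^2 := by
      have := Real.exp_lt_exp.mpr hlt
      rwa [Real.exp_log hPpos, Real.exp_log (by positivity)] at this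
    norm_num at hPlt
    have : P < 4 := by exact_mod_cast hPlt
    omega
  · have hp3 : (3:ℝ) ≤ (p:ℝ) := by exact_mod_cast hpge
    rcases Nat.lt_or_ge P (p^2) with hPp2 | hp2P
    · -- case P < p² : derive P^p ≤ p^(p+1) and p² ≤ P + p, contradiction
      have hPle : (P:ℝ) ≤ (p:ℝ)^2 - 1 := by
        have : (P:ℝ) + 1 ≤ ((p^2 : ℕ):ℝ) := by exact_mod_cast hPp2
        push_cast at this
        linarith
      -- p^(α-1) ≥ p
      have hpm1ge : (p:ℝ) ≤ (p:ℝ)^(α-1) := by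
        calc (p:ℝ) = (p:ℝ)^1 := (pow_one _).symm
          _ ≤ (p:ℝ)^(α-1) := pow_le_pow_right₀ (by linarith) (by omega)
      have key1 : (p:ℝ) * (((p:ℝ)-1) * Real.log P) ≤ ((p:ℝ)-1) * (((p:ℝ)+1) * Real.log p) := by
        have lhs : (p:ℝ) * (((p:ℝ)-1) * Real.log P) ≤ (p:ℝ)^(α-1) * (((p:ℝ)-1) * Real.log P) := by
          apply mul_le_mul_of_nonneg_right hpm1ge
          exact mul_nonneg (by linarith) (le_of_lt hlogP)
        have mid : (p:ℝ)^(α-1) * (((p:ℝ)-1) * Real.log P) ≤ (P:ℝ) * Real.log p := by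
          calc (p:ℝ)^(α-1) * (((p:ℝ)-1) * Real.log P)
              = ((p:ℝ)^α - (p:ℝ)^(α-1)) * Real.log P := by rw [epow]; ring
            _ ≤ (P:ℝ) * Real.log p := H
        have rhs : (P:ℝ) * Real.log p ≤ ((p:ℝ)^2 - 1) * Real.log p :=
          mul_le_mul_of_nonneg_right hPle (le_of_lt hlogp)
        calc (p:ℝ) * (((p:ℝ)-1) * Real.log P) ≤ (P:ℝ) * Real.log p := le_trans lhs mid
          _ ≤ ((p:ℝ)^2 - 1) * Real.log p := rhs
          _ = ((p:ℝ)-1) * (((p:ℝ)+1) * Real.log p) := by ring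
      have key2 : (p:ℝ) * Real.log P ≤ ((p:ℝ)+1) * Real.log p := by
        have hpm1 : (0:ℝ) < (p:ℝ) - 1 := by linarith
        have : ((p:ℝ)-1) * ((p:ℝ) * Real.log P) ≤ ((p:ℝ)-1) * (((p:ℝ)+1) * Real.log p) := by
          calc ((p:ℝ)-1) * ((p:ℝ) * Real.log P) = (p:ℝ) * (((p:ℝ)-1) * Real.log P) := by ring
            _ ≤ ((p:ℝ)-1) * (((p:ℝ)+1) * Real.log p) := key1
        exact le_of_mul_le_mul_left this hpm1
      -- so P^p ≤ p^(p+1)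
      have hPp : (P:ℝ)^p ≤ (p:ℝ)^(p+1) := by
        have h5 : Real.log ((P:ℝ)^p) ≤ Real.log ((p:ℝ)^(p+1)) := by
          rw [Real.log_pow, Real.log_pow]
          push_cast
          linarith
        have := Real.exp_le_exp.mpr h5
        rwa [Real.exp_log (pow_pos hPpos p), Real.exp_log (pow_pos hppos (p+1))] at this
      have hPpNat : P^p ≤ p^(p+1) := by exact_mod_cast hPp
      -- also p² ≤ P + p
      have hP2p : p^2 ≤ P + p := by
        have h6 : (p:ℝ)^(α-1) * (((p:ℝ)-1) * Real.log P) ≤ (P:ℝ) * Real.log P := by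
          calc (p:ℝ)^(α-1) * (((p:ℝ)-1) * Real.log P)
              = ((p:ℝ)^α - (p:ℝ)^(α-1)) * Real.log P := by rw [epow]; ring
            _ ≤ (P:ℝ) * Real.log p := H
            _ ≤ (P:ℝ) * Real.log P := by
                apply mul_le_mul_of_nonneg_left hlogpP (by positivity)
        have h7 : (p:ℝ)^(α-1) * ((p:ℝ)-1) ≤ (P:ℝ) := by
          have := h6
          have h8 : ((p:ℝ)^(α-1) * ((p:ℝ)-1)) * Real.log P ≤ (P:ℝ) * Real.log P := by
            calc ((p:ℝ)^(α-1) * ((p:ℝ)-1)) * Real.log P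
                = (p:ℝ)^(α-1) * (((p:ℝ)-1) * Real.log P) := by ring
              _ ≤ (P:ℝ) * Real.log P := h6
          exact le_of_mul_le_mul_right h8 hlogP
        have h9 : (p:ℝ) * ((p:ℝ)-1) ≤ (P:ℝ) := by
          have hpm1ge' : (p:ℝ) * ((p:ℝ)-1) ≤ (p:ℝ)^(α-1) * ((p:ℝ)-1) :=
            mul_le_mul_of_nonneg_right hpm1ge (by linarith)
          linarith
        have : (p:ℝ)^2 ≤ (P:ℝ) + p := by nlinarith
        exact_mod_cast this
      -- contradiction: P ≥ p² - p = p(p-1) ≥ 2p ⇒ P^p ≥ (2p)^p = 2^p p^p > p·p^p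
      have hP2pge : 2*p ≤ P := by nlinarith
      have c1 : (2*p)^p ≤ P^p := Nat.pow_le_pow_left hP2pge p
      have c2 : (2*p)^p = 2^p * p^p := by rw [Nat.mul_pow]
      have c3 : p + 1 ≤ 2^p := Nat.succ_le_of_lt ((Nat.lt_two_pow_self (n := p)))
      have hppn : 0 < p^p := Nat.pow_pos (by omega)
      have c4 : p^(p+1) < (p+1) * p^p := by
        calc p^(p+1) = p^p * p := by rw [pow_succ]
          _ < p^p * (p+1) := by
            apply Nat.mul_lt_mul_of_le_of_lt (le_refl _) (by omega) hppn
          _ = (p+1) * p^p := Nat.mul_comm _ _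
      have c5 : (p+1) * p^p ≤ 2^p * p^p := Nat.mul_le_mul_right _ c3
      have : P^p < P^p :=
        lt_of_le_of_lt hPpNat (lt_of_lt_of_le c4 (le_trans c5 (by rw [← c2]; exact c1)))
      exact absurd this (lt_irrefl _)
    · -- case p² ≤ P : log P ≥ 2 log p, contradiction with step2
      have h10 : 2 * Real.log p ≤ Real.log P := by
        have : ((p^2:ℕ):ℝ) ≤ (P:ℝ) := by exact_mod_cast hp2P
        have h11 := Real.log_le_log (by positivity) this
        push_cast at h11
        rwa [Real.log_pow] at h11
        
      have : ((p:ℝ)-1) * (2 * Real.log p) < (p:ℝ) * Real.log p := by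
        calc ((p:ℝ)-1) * (2*Real.log p) ≤ ((p:ℝ)-1) * Real.log P := by
              apply mul_le_mul_of_nonneg_left h10 (by linarith)
          _ < (p:ℝ) * Real.log p := step2
      nlinarith

theorem key_bound (P : ℕ) (hP5 : 5 ≤ P) (a : ℕ → ℕ) (ρ : ℝ)
    (hρ : ρ = (P:ℝ)/Real.log P)
    (hgood : ∀ p, p.Prime → p ≤ P → 1 ≤ a p ∧
      (creal p (a p) - creal p (a p - 1) ≤ ρ * Real.log p) ∧
      ρ * Real.log p < creal p (a p + 1) - creal p (a p))
    (h0 : ∀ p, p.Prime → P < p → a p = 0)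
    (M : ℕ) (hM : M ≠ 0)
    (hell : ellF M ≤ ∑ p ∈ Finset.filter Nat.Prime (Finset.range (P+1)), p ^ a p) :
    M ≤ ∏ p ∈ Finset.filter Nat.Prime (Finset.range (P+1)), p ^ a p := by
  classical
  set Pr := Finset.filter Nat.Prime (Finset.range (P+1)) with hPr
  set S : Finset ℕ := Pr ∪ M.primeFactors with hS
  have hlogP : 0 < Real.log P := Real.log_pos (by
    have : (5:ℝ) ≤ P := by exact_mod_cast hP5
    linarith)
  have hρpos : 0 < ρ := by
    rw [hρ]
    apply div_pos _ hlogP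
    have : 0 < P := by omega
    exact_mod_cast this
  have hρlogP : ρ * Real.log P = P := by rw [hρ]; exact div_mul_cancel₀ _ (ne_of_gt hlogP)
  have hSprime : ∀ p ∈ S, p.Prime := by
    intro p hp
    rcases Finset.mem_union.mp hp with h | h
    · exact (Finset.mem_filter.mp h).2
    · exact Nat.prime_of_mem_primeFactors h
  have hPrP : ∀ p ∈ Pr, p ≤ P := by
    intro p hp
    have := (Finset.mem_filter.mp hp).1
    have := Finset.mem_range.mp this
    omega
  -- per-prime inequality
  have hterm : ∀ p ∈ S,
      ρ * (M.factorization p : ℝ) * Real.log p - creal p (M.factorization p) ≤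
      ρ * (a p : ℝ) * Real.log p - creal p (a p) := by
    intro p hpS
    have hp := hSprime p hpS
    have hlogp : 0 < Real.log p := Real.log_pos (by exact_mod_cast hp.one_lt)
    rcases le_or_gt p P with hpP | hPp
    · obtain ⟨h1, h2, h3⟩ := hgood p hp hpP
      refine Fmax p hp.two_le ρ (a p) ?_ (le_of_lt h3) (M.factorization p)
      intro j hj
      calc creal p (j+1) - creal p j
          ≤ creal p ((a p - 1)+1) - creal p (a p - 1) := creal_step_mono' p hp.two_le (by omega)
        _ = creal p (a p) - creal p (a p - 1) := by
            congr 2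
            omega
        _ ≤ ρ * Real.log p := h2
    · have ha0 : a p = 0 := h0 p hp hPp
      rw [ha0]
      refine Fmax p hp.two_le ρ 0 (fun j hj => by omega) ?_ (M.factorization p)
      -- ρ log p ≤ creal p 1 - creal p 0 = p
      have h4 := plogP_ge P p hP5 hPp
      have : ρ * Real.log p ≤ (p:ℝ) := by
        rw [hρ, div_mul_eq_mul_div, div_le_iff₀ hlogP]
        linarith
      have e : creal p 1 - creal p 0 = (p:ℝ) := by
        simp [creal]
      linarith [e ▸ this]
  have hsum := Finset.sum_le_sum hterm
  -- identify the four sums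
  have hpfS : M.primeFactors ⊆ S := Finset.subset_union_right
  have hPrS : Pr ⊆ S := Finset.subset_union_left
  have hlogM : Real.log M = ∑ p ∈ S, (M.factorization p : ℝ) * Real.log p := by
    have hMfact : (M:ℝ) = ∏ p ∈ M.primeFactors, ((p:ℝ) ^ M.factorization p) := by
      conv_lhs => rw [← Nat.factorization_prod_pow_eq_self hM]
      rw [Nat.prod_factorization_eq_prod_primeFactors]
      push_cast
      rfl
    rw [hMfact]
    calc Real.log (∏ p ∈ M.primeFactors, ((p:ℝ) ^ M.factorization p))
        = ∑ p ∈ M.primeFactors, Real.log ((p:ℝ) ^ M.factorization p) :=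
          Real.log_prod (fun p hp => by
            have := (Nat.prime_of_mem_primeFactors hp).two_le
            positivity)
      _ = ∑ p ∈ M.primeFactors, (M.factorization p : ℝ) * Real.log p :=
          Finset.sum_congr rfl fun p _ => Real.log_pow _ _
      _ = ∑ p ∈ S, (M.factorization p : ℝ) * Real.log p := by
          apply Finset.sum_subset hpfS
          intro p hpS hnp
          have hp := hSprime p hpS
          have hv : M.factorization p = 0 := by
            by_contra h
            exact hnp (Nat.mem_primeFactors.mpr ⟨hp, Nat.dvd_of_factorization_pos h, hM⟩)
          rw [hv]
          simp
  have hcM : (ellF M : ℝ) = ∑ p ∈ S, creal p (M.factorization p) := by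
    rw [ellF]
    push_cast
    calc ∑ p ∈ M.primeFactors, ((p:ℝ)) ^ M.factorization p
        = ∑ p ∈ M.primeFactors, creal p (M.factorization p) := by
          apply Finset.sum_congr rfl
          intro p hp
          exact (creal_of_pos p _ ((Nat.prime_of_mem_primeFactors hp).factorization_pos_of_dvd
            hM (Nat.dvd_of_mem_primeFactors hp))).symm
      _ = ∑ p ∈ S, creal p (M.factorization p) := by
          apply Finset.sum_subset hpfS
          intro p hpS hnp
          have hp := hSprime p hpS
          have hv : M.factorization p = 0 := by
            by_contra h
            exact hnp (Nat.mem_primeFactors.mpr ⟨hp, Nat.dvd_of_factorization_pos h, hM⟩)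
          rw [hv]
          rfl
  have hnotPr : ∀ p ∈ S, p ∉ Pr → a p = 0 := by
    intro p hpS hnp
    have hp := hSprime p hpS
    rcases le_or_gt p P with h | h
    · exact absurd (Finset.mem_filter.mpr ⟨Finset.mem_range.mpr (by omega), hp⟩) hnp
    · exact h0 p hp h
  have hlogN : Real.log ((∏ p ∈ Pr, p ^ a p : ℕ) : ℝ) = ∑ p ∈ S, (a p : ℝ) * Real.log p := by
    have hcast : ((∏ p ∈ Pr, p ^ a p : ℕ) : ℝ) = ∏ p ∈ Pr, ((p:ℝ)) ^ a p := by push_cast; rfl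
    rw [hcast]
    calc Real.log (∏ p ∈ Pr, ((p:ℝ)) ^ a p)
        = ∑ p ∈ Pr, Real.log (((p:ℝ)) ^ a p) :=
          Real.log_prod (fun p hp => by
            have := ((Finset.mem_filter.mp hp).2).two_le
            positivity)
      _ = ∑ p ∈ Pr, (a p : ℝ) * Real.log p :=
          Finset.sum_congr rfl fun p _ => Real.log_pow _ _
      _ = ∑ p ∈ S, (a p : ℝ) * Real.log p := by
          apply Finset.sum_subset hPrS
          intro p hpS hnp
          rw [hnotPr p hpS hnp]
          simp
  have hcN : ((∑ p ∈ Pr, p ^ a p : ℕ) : ℝ) = ∑ p ∈ S, creal p (a p) := by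
    push_cast
    calc ∑ p ∈ Pr, ((p:ℝ)) ^ a p
        = ∑ p ∈ Pr, creal p (a p) := by
          apply Finset.sum_congr rfl
          intro p hp
          have hp' := (Finset.mem_filter.mp hp).2
          exact (creal_of_pos p _ (hgood p hp' (hPrP p hp)).1).symm
      _ = ∑ p ∈ S, creal p (a p) := by
          apply Finset.sum_subset hPrS
          intro p hpS hnp
          rw [hnotPr p hpS hnp]
          rfl
  have lhs_eq : ∑ p ∈ S, (ρ * (M.factorization p : ℝ) * Real.log p - creal p (M.factorization p))
      = ρ * Real.log M - (ellF M : ℝ) := by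
    rw [Finset.sum_sub_distrib]
    congr 1
    · rw [hlogM, Finset.mul_sum]
      exact Finset.sum_congr rfl fun p _ => by ring
    · exact hcM.symm
  have rhs_eq : ∑ p ∈ S, (ρ * (a p : ℝ) * Real.log p - creal p (a p))
      = ρ * Real.log ((∏ p ∈ Pr, p ^ a p : ℕ) : ℝ) - ((∑ p ∈ Pr, p ^ a p : ℕ) : ℝ) := by
    rw [Finset.sum_sub_distrib]
    congr 1
    · rw [hlogN, Finset.mul_sum]
      exact Finset.sum_congr rfl fun p _ => by ring
    · exact hcN.symm
  rw [lhs_eq, rhs_eq] at hsum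
  have hellR : (ellF M : ℝ) ≤ ((∑ p ∈ Pr, p ^ a p : ℕ) : ℝ) := by exact_mod_cast hell
  have hloglog : Real.log M ≤ Real.log ((∏ p ∈ Pr, p ^ a p : ℕ) : ℝ) := by
    have : ρ * Real.log M ≤ ρ * Real.log ((∏ p ∈ Pr, p ^ a p : ℕ) : ℝ) := by linarith
    exact le_of_mul_le_mul_left this hρpos
  have hNpos : 0 < ∏ p ∈ Pr, p ^ a p :=
    Finset.prod_pos fun p hp => pow_pos ((Finset.mem_filter.mp hp).2).pos _
  have : (M:ℝ) ≤ ((∏ p ∈ Pr, p ^ a p : ℕ) : ℝ) := by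
    rw [← Real.exp_log (by exact_mod_cast Nat.pos_of_ne_zero hM : (0:ℝ) < (M:ℝ)),
      ← Real.exp_log (by exact_mod_cast hNpos : (0:ℝ) < ((∏ p ∈ Pr, p ^ a p : ℕ) : ℝ))]
    exact Real.exp_le_exp.mpr hloglog
  exact_mod_cast this

/-- Landau's function: the maximal order of a permutation of the symmetric group on `n` letters. -/
noncomputable def landau (n : ℕ) : ℕ :=
  Finset.univ.sup fun σ : Equiv.Perm (Fin n) => orderOf σ

/-- The largest prime factor of `m` (0 if `m` has no prime factor). -/
def maxPrimeFac (m : ℕ) : ℕ := m.primeFactors.sup id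

/-- Chebyshev's function θ(x) = Σ_{p ≤ x, p prime} log p. -/
noncomputable def chebTheta (x : ℝ) : ℝ :=
  ∑ p ∈ Finset.filter Nat.Prime (Finset.range (⌊x⌋₊ + 1)), Real.log p

/-- Chebyshev's function ψ(x) = Σ_{n ≤ x} Λ(n). -/
noncomputable def chebPsi (x : ℝ) : ℝ :=
  ∑ n ∈ Finset.range (⌊x⌋₊ + 1), ArithmeticFunction.vonMangoldt n

/-- For a prime P ≥ 5 and ρ = P/log P, with the exponents α_p as in the definition of
the ℓ-superchampion N_P = ∏_{p ≤ P} p^{α_p} and n_P = Σ_{p ≤ P} p^{α_p}, one has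
g(n_P) = N_P and θ(P) ≤ log N_P ≤ ψ(P). -/
theorem stmt19 (P : ℕ) (hP : P.Prime) (hP5 : 5 ≤ P) (a : ℕ → ℕ)
    (h0 : ∀ p : ℕ, p.Prime → P < p → a p = 0)
    (h1 : ∀ p : ℕ, p.Prime → p ≤ P →
      (P : ℝ) / Real.log P < ((p : ℝ) ^ 2 - (p : ℝ)) / Real.log p → a p = 1)
    (h2 : ∀ p : ℕ, p.Prime → p ≤ P → ∀ i : ℕ, 2 ≤ i →
      ((p : ℝ) ^ i - (p : ℝ) ^ (i - 1)) / Real.log p ≤ (P : ℝ) / Real.log P →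
      (P : ℝ) / Real.log P < ((p : ℝ) ^ (i + 1) - (p : ℝ) ^ i) / Real.log p → a p = i) :
    landau (∑ p ∈ Finset.filter Nat.Prime (Finset.range (P + 1)), p ^ a p) =
      ∏ p ∈ Finset.filter Nat.Prime (Finset.range (P + 1)), p ^ a p ∧
    chebTheta (P : ℝ) ≤
      Real.log (∏ p ∈ Finset.filter Nat.Prime (Finset.range (P + 1)), p ^ a p) ∧
    Real.log (∏ p ∈ Finset.filter Nat.Prime (Finset.range (P + 1)), p ^ a p) ≤
      chebPsi (P : ℝ) := by
  classical
  have hlogP : 0 < Real.log P := Real.log_pos (by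
    have : (5:ℝ) ≤ P := by exact_mod_cast hP5
    linarith)
  set ρ : ℝ := (P:ℝ)/Real.log P with hρ
  have hρlogP : ρ * Real.log P = P := div_mul_cancel₀ _ (ne_of_gt hlogP)
  set Pr := Finset.filter Nat.Prime (Finset.range (P + 1)) with hPrdef
  have hPrP : ∀ p ∈ Pr, p.Prime ∧ p ≤ P := by
    intro p hp
    obtain ⟨hr, hpp⟩ := Finset.mem_filter.mp hp
    exact ⟨hpp, by have := Finset.mem_range.mp hr; omega⟩
  -- the determination of the exponents
  have hgood : ∀ p, p.Prime → p ≤ P → 1 ≤ a p ∧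
      (creal p (a p) - creal p (a p - 1) ≤ ρ * Real.log p) ∧
      ρ * Real.log p < creal p (a p + 1) - creal p (a p) := by
    intro p hp hpP
    have hlogp : 0 < Real.log p := Real.log_pos (by exact_mod_cast hp.one_lt)
    rcases determine P p hP5 hp hpP with hc | ⟨i, h2i, hile, hilt⟩
    · have ha := h1 p hp hpP hc
      rw [ha]
      have e1 : creal p 1 - creal p 0 = (p:ℝ) := by
        simp [creal]
      have e2 : creal p 2 - creal p 1 = (p:ℝ)^2 - (p:ℝ) := by
        norm_num [creal]
      refine ⟨le_refl 1, ?_, ?_⟩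
      · rw [show (1:ℕ) - 1 = 0 from rfl, e1]
        have hplog := plogP_le P p hP5 hp hpP
        rw [hρ, div_mul_eq_mul_div, le_div_iff₀ hlogP]
        linarith
      · rw [show (1:ℕ) + 1 = 2 from rfl, e2]
        calc ρ * Real.log p = (ρ * Real.log p / Real.log p) * Real.log p := by
              field_simp
          _ < ((p:ℝ)^2 - p) := by
              have : ρ * Real.log p / Real.log p = ρ := by field_simp
              rw [this]
              exact (lt_div_iff₀ hlogp).mp hc
    · have ha := h2 p hp hpP i h2i hile hilt
      rw [ha]
      refine ⟨by omega, ?_, ?_⟩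
      · rw [creal_of_pos p i (by omega), creal_of_pos p (i-1) (by omega)]
        exact (div_le_iff₀ hlogp).mp hile
      · rw [creal_of_pos p (i+1) (by omega), creal_of_pos p i (by omega)]
        exact (lt_div_iff₀ hlogp).mp hilt
  -- log N as a sum
  have hNpos : 0 < ∏ p ∈ Pr, p ^ a p :=
    Finset.prod_pos fun p hp => pow_pos ((hPrP p hp).1).pos _
  have hlogN : Real.log (∏ p ∈ Pr, ((p:ℝ)) ^ a p) = ∑ p ∈ Pr, (a p : ℝ) * Real.log p := by
    rw [Real.log_prod (fun p hp => by
      have := ((hPrP p hp).1).two_le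
      positivity)]
    exact Finset.sum_congr rfl fun p _ => Real.log_pow _ _
  refine ⟨?_, ?_, ?_⟩
  · -- landau (n_P) = N_P
    apply le_antisymm
    · apply Finset.sup_le
      intro σ _
      exact key_bound P hP5 a ρ hρ hgood h0 (orderOf σ) (ne_of_gt (orderOf_pos σ))
        (ellF_orderOf_le σ)
    · obtain ⟨σ, hσ⟩ := exists_perm_orderOf Pr (fun p hp => (hPrP p hp).1) a
        (fun p hp => (hgood p (hPrP p hp).1 (hPrP p hp).2).1)
      calc (∏ p ∈ Pr, p ^ a p) = orderOf σ := hσ.symm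
        _ ≤ landau (∑ p ∈ Pr, p ^ a p) := Finset.le_sup (Finset.mem_univ σ)
  · -- θ(P) ≤ log N_P
    have hfloor : ⌊(P:ℝ)⌋₊ = P := Nat.floor_natCast P
    rw [chebTheta, hfloor, hlogN, ← hPrdef]
    apply Finset.sum_le_sum
    intro p hp
    have hp' := (hPrP p hp).1
    have hlogp : 0 ≤ Real.log p := Real.log_nonneg (by
      have := hp'.one_lt
      exact_mod_cast le_of_lt this)
    have h1a : (1:ℝ) ≤ (a p : ℝ) := by
      exact_mod_cast (hgood p hp' (hPrP p hp).2).1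
    nlinarith
  · -- log N_P ≤ ψ(P)
    have hfloor : ⌊(P:ℝ)⌋₊ = P := Nat.floor_natCast P
    rw [chebPsi, hfloor, hlogN]
    -- the key bound pᵃ ≤ P
    have hpow_le : ∀ p ∈ Pr, p ^ a p ≤ P := by
      intro p hp
      obtain ⟨hp', hpP⟩ := hPrP p hp
      obtain ⟨hg1, hg2, _⟩ := hgood p hp' hpP
      apply hard_bound P p (a p) hP5 hp' hpP hg1
      intro h2a
      rw [creal_of_pos p (a p) (by omega), creal_of_pos p (a p - 1) (by omega)] at hg2
      calc ((p:ℝ)^(a p) - (p:ℝ)^(a p - 1)) * Real.log P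
          ≤ (ρ * Real.log p) * Real.log P := by
            apply mul_le_mul_of_nonneg_right hg2 (le_of_lt hlogP)
        _ = (ρ * Real.log P) * Real.log p := by ring
        _ = (P:ℝ) * Real.log p := by rw [hρlogP]
    -- sum over prime powers
    set T : Finset ((_ : ℕ) × ℕ) := Pr.sigma (fun p => Finset.Icc 1 (a p)) with hT
    have hsig : ∑ x ∈ T, ArithmeticFunction.vonMangoldt (x.1 ^ x.2)
        = ∑ p ∈ Pr, (a p : ℝ) * Real.log p := by
      rw [hT, Finset.sum_sigma]
      apply Finset.sum_congr rfl
      intro p hp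
      have hp' := (hPrP p hp).1
      have : ∀ k ∈ Finset.Icc 1 (a p),
          ArithmeticFunction.vonMangoldt (p ^ k) = Real.log p := by
        intro k hk
        have hk1 : k ≠ 0 := by
          have := (Finset.mem_Icc.mp hk).1
          omega
        rw [ArithmeticFunction.vonMangoldt_apply_pow hk1,
          ArithmeticFunction.vonMangoldt_apply_prime hp']
      rw [Finset.sum_congr rfl this, Finset.sum_const, Nat.card_Icc]
      simp [nsmul_eq_mul]
    have hinj : ∀ x ∈ T, ∀ y ∈ T, x.1 ^ x.2 = y.1 ^ y.2 → x = y := by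
      rintro ⟨p, k⟩ hx ⟨q, l⟩ hy hxy
      obtain ⟨hpPr, hkI⟩ := Finset.mem_sigma.mp hx
      obtain ⟨hqPr, hlI⟩ := Finset.mem_sigma.mp hy
      have hp' := (hPrP p hpPr).1
      have hq' := (hPrP q hqPr).1
      have hk1 : 1 ≤ k := (Finset.mem_Icc.mp hkI).1
      have hl1 : 1 ≤ l := (Finset.mem_Icc.mp hlI).1
      simp only at hxy
      have hpq : p = q := by
        have hd : p ∣ q ^ l := by
          rw [← hxy]
          exact dvd_pow_self p (by omega)
        have := hp'.dvd_of_dvd_pow hd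
        exact ((Nat.prime_dvd_prime_iff_eq hp' hq').mp this)
      subst hpq
      have hkl : k = l := Nat.pow_right_injective hp'.two_le hxy
      subst hkl
      rfl
    have himg : ∑ m ∈ T.image (fun x => x.1 ^ x.2), ArithmeticFunction.vonMangoldt m
        = ∑ x ∈ T, ArithmeticFunction.vonMangoldt (x.1 ^ x.2) :=
      Finset.sum_image hinj
    have hsub : T.image (fun x => x.1 ^ x.2) ⊆ Finset.range (P + 1) := by
      intro m hm
      obtain ⟨⟨p, k⟩, hxT, rfl⟩ := Finset.mem_image.mp hm
      obtain ⟨hpPr, hkI⟩ := Finset.mem_sigma.mp hxT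
      have hp' := (hPrP p hpPr).1
      have hk : k ≤ a p := (Finset.mem_Icc.mp hkI).2
      have : p ^ k ≤ p ^ a p := Nat.pow_le_pow_right hp'.pos hk
      have := le_trans this (hpow_le p hpPr)
      simp only [Finset.mem_range]
      omega
    calc ∑ p ∈ Pr, (a p : ℝ) * Real.log p
        = ∑ m ∈ T.image (fun x => x.1 ^ x.2), ArithmeticFunction.vonMangoldt m := by
          rw [himg, hsig]
      _ ≤ ∑ m ∈ Finset.range (P + 1), ArithmeticFunction.vonMangoldt m :=
          Finset.sum_le_sum_of_subset_of_nonneg hsub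
            (fun m _ _ => ArithmeticFunction.vonMangoldt_nonneg)
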